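/- arXiv:1701.00655 — 4 statements merged into one kernel-verified Lean document; each statement's English description precedes it below -/
import Mathlib

section
/- Let r ≥ 1, p a prime, and let D be a one-dimensional étale (φ^r,Γ)-module over k((t)) (k a finite field of characteristic p), with invariants n(D) ∈ [1, p^r−1] defined by the property that some basis element g satisfies φ^r g = ξ t^{n(D)+1−p^r} g for a scalar ξ ∈ k^×, and with Γ acting on g modulo t·k[[t]]·g through x ↦ x^{s(D)}. Then n(D) ≡ 0 modulo (p−1). -/
open PowerSeries HahnSeries

section Helpers

variable {k : Type*} [Field k] {p : ℕ}

lemma my_ps_charP (hp : p.Prime) [CharP k p] : CharP (PowerSeries k) p :=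
  charP_of_injective_ringHom (PowerSeries.C_injective) p

lemma my_coeff_pow_char (hp : p.Prime) [CharP k p] (w : PowerSeries k) (i : ℕ) :
    PowerSeries.coeff i (w ^ p) =
      if p ∣ i then (PowerSeries.coeff (i / p) w) ^ p else 0 := by
  haveI : CharP (PowerSeries k) p := my_ps_charP hp
  haveI : Fact p.Prime := ⟨hp⟩
  set P : Polynomial k := PowerSeries.trunc (i + 1) w with hPdef
  have hcoeffP : ∀ m : ℕ, m ≤ i → P.coeff m = PowerSeries.coeff m w := by
    intro m hm
    rw [hPdef, PowerSeries.coeff_trunc, if_pos (by omega)]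
  have hdvd : (PowerSeries.X : PowerSeries k) ^ (i + 1) ∣ (w - ↑P) := by
    rw [PowerSeries.X_pow_dvd_iff]
    intro m hm
    rw [map_sub, Polynomial.coeff_coe, hcoeffP m (by omega), sub_self]
  have hsplit : w ^ p = (↑P : PowerSeries k) ^ p + (w - ↑P) ^ p := by
    rw [← add_pow_char (↑P : PowerSeries k) (w - ↑P) p]; ring_nf
  have hR : PowerSeries.coeff i ((w - ↑P : PowerSeries k) ^ p) = 0 := by
    have : (PowerSeries.X : PowerSeries k) ^ (i + 1) ∣ (w - ↑P) ^ p :=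
      hdvd.trans (dvd_pow_self _ hp.ne_zero)
    exact PowerSeries.X_pow_dvd_iff.mp this i (by omega)
  have hPpow : PowerSeries.coeff i ((↑P : PowerSeries k) ^ p) =
      if p ∣ i then (P.coeff (i / p)) ^ p else 0 := by
    rw [← Polynomial.coe_pow, Polynomial.coeff_coe, ← Polynomial.map_frobenius_expand (p := p) P,
      Polynomial.coeff_map, Polynomial.coeff_expand hp.pos]
    split_ifs with h
    · rw [frobenius_def]
    · rw [map_zero]
  rw [hsplit, map_add, hR, add_zero, hPpow]
  split_ifs with h
  · rw [hcoeffP (i / p) (Nat.div_le_self _ _)]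
  · rfl

lemma my_AS_root (hp : p.Prime) [CharP k p] (c : PowerSeries k)
    (hc : PowerSeries.constantCoeff c = 0) :
    ∃ y : PowerSeries k, PowerSeries.constantCoeff y = 0 ∧ y ^ p - y = c := by
  haveI : CharP (PowerSeries k) p := my_ps_charP hp
  haveI : Fact p.Prime := ⟨hp⟩
  haveI : ExpChar k p := ExpChar.prime hp
  have hvan : ∀ j i : ℕ, i < p ^ j → PowerSeries.coeff i (c ^ p ^ j) = 0 := by
    intro j i hij
    have hX : (PowerSeries.X : PowerSeries k) ∣ c := PowerSeries.X_dvd_iff.mpr hc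
    have : (PowerSeries.X : PowerSeries k) ^ (p ^ j) ∣ c ^ p ^ j := pow_dvd_pow_of_dvd hX _
    exact PowerSeries.X_pow_dvd_iff.mp this i hij
  set S : PowerSeries k :=
    PowerSeries.mk (fun i => ∑ j ∈ Finset.range (i + 1), PowerSeries.coeff i (c ^ p ^ j))
    with hSdef
  have hS : ∀ i : ℕ, PowerSeries.coeff i S
      = ∑ j ∈ Finset.range (i + 1), PowerSeries.coeff i (c ^ p ^ j) := by
    intro i; rw [hSdef, PowerSeries.coeff_mk]
  have hS0 : PowerSeries.coeff 0 S = 0 := by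
    rw [hS 0, Finset.sum_range_one, pow_zero, pow_one,
      PowerSeries.coeff_zero_eq_constantCoeff, hc]
  have hsucc : ∀ (i j : ℕ), c ^ p ^ (j + 1) = (c ^ p ^ j) ^ p := by
    intro i j; rw [pow_succ, pow_mul]
  have hmain : ∀ i, PowerSeries.coeff i (S ^ p)
      = PowerSeries.coeff i S - PowerSeries.coeff i c := by
    intro i
    have hRHS : PowerSeries.coeff i S - PowerSeries.coeff i c
        = ∑ j ∈ Finset.range i, PowerSeries.coeff i (c ^ p ^ (j + 1)) := by
      rw [hS, Finset.sum_range_succ']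
      simp [pow_zero, pow_one]
    rw [my_coeff_pow_char hp, hRHS]
    by_cases hdvd : p ∣ i
    · obtain ⟨i', rfl⟩ := hdvd
      rw [if_pos ⟨i', rfl⟩]
      rcases Nat.eq_zero_or_pos i' with rfl | hi'
      · simp only [Nat.mul_zero, Nat.zero_div, Finset.range_zero, Finset.sum_empty]
        rw [hS0]
        exact zero_pow hp.ne_zero
      · have hdiv : p * i' / p = i' := Nat.mul_div_cancel_left i' hp.pos
        rw [hdiv, hS, sum_pow_char]
        have hterm : ∀ j, (PowerSeries.coeff i' (c ^ p ^ j)) ^ p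
            = PowerSeries.coeff (p * i') (c ^ p ^ (j + 1)) := by
          intro j
          rw [hsucc i' j, my_coeff_pow_char hp, if_pos ⟨i', rfl⟩, hdiv]
        rw [Finset.sum_congr rfl (fun j _ => hterm j)]
        apply Finset.sum_subset
        · intro j hj
          simp only [Finset.mem_range] at hj ⊢
          have : i' + 1 ≤ p * i' := by nlinarith [hp.two_le]
          omega
        · intro j hj hj'
          simp only [Finset.mem_range] at hj hj'
          apply hvan
          have h1 : i' < 2 ^ (i' + 1) := by
            calc i' < 2 ^ i' := Nat.lt_two_pow_self
            _ ≤ 2 ^ (i' + 1) := Nat.pow_le_pow_right (by omega) (by omega)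
          have h2 : i' < p ^ (i' + 1) :=
            lt_of_lt_of_le h1 (Nat.pow_le_pow_left hp.two_le _)
          calc p * i' < p * p ^ (i' + 1) := by
                have hpos := hp.pos
                exact (Nat.mul_lt_mul_left hpos).mpr h2
            _ = p ^ (i' + 2) := by ring
            _ ≤ p ^ (j + 1) := Nat.pow_le_pow_right hp.pos (by omega)
    · rw [if_neg hdvd]
      symm
      apply Finset.sum_eq_zero
      intro j _
      rw [hsucc i j, my_coeff_pow_char hp, if_neg hdvd]
  have hSeq : S ^ p = S - c := by
    ext i
    rw [hmain i, map_sub]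
  refine ⟨-S, ?_, ?_⟩
  · rw [map_neg, ← PowerSeries.coeff_zero_eq_constantCoeff, hS0, neg_zero]
  have hneg : (-S) ^ p = -(S ^ p) := by
    rcases hp.eq_two_or_odd' with h2 | hodd
    · subst h2
      rw [neg_pow, neg_one_sq, one_mul, CharTwo.neg_eq]
    · exact hodd.neg_pow S
  rw [hneg, hSeq]
  ring

lemma my_leadingCoeff_pow (W : LaurentSeries k) (hW : W ≠ 0) (m : ℕ) :
    (W ^ m).leadingCoeff = W.leadingCoeff ^ m := by
  induction m with
  | zero => rw [pow_zero, pow_zero, HahnSeries.leadingCoeff_one]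
  | succ m ih =>
    have hWm : W ^ m ≠ 0 := pow_ne_zero _ hW
    rw [pow_succ, HahnSeries.leadingCoeff_eq,
      HahnSeries.order_mul hWm hW, HahnSeries.coeff_mul_order_add_order, ih, pow_succ]

/-- negative coefficients of `ofPowerSeries` vanish -/
lemma my_ofPS_neg_coeff (d : PowerSeries k) (j : ℤ) (hj : j < 0) :
    ((HahnSeries.ofPowerSeries ℤ k) d).coeff j = 0 := by
  rw [HahnSeries.ofPowerSeries_apply]
  apply HahnSeries.embDomain_notin_image_support
  rintro ⟨n, -, hn⟩
  have hn' : ((n : ℤ)) = j := hn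
  omega

/-- a Laurent series with no negative coefficients comes from a power series -/
lemma my_exists_ofPS (W : LaurentSeries k) (h : ∀ j : ℤ, j < 0 → W.coeff j = 0) :
    ∃ d : PowerSeries k, W = (HahnSeries.ofPowerSeries ℤ k) d := by
  refine ⟨PowerSeries.mk (fun i => W.coeff (i : ℤ)), ?_⟩
  ext j
  rcases lt_or_ge j 0 with hj | hj
  · rw [h j hj, my_ofPS_neg_coeff _ j hj]
  · obtain ⟨n, rfl⟩ := Int.eq_ofNat_of_zero_le hj
    rw [HahnSeries.ofPowerSeries_apply_coeff, PowerSeries.coeff_mk]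


section Descent
variable [CharP k p]

/-- Artin–Schreier descent: the image under `ψ` of a constant-term-zero power series
has no coefficients at negative indices of the form `-(M+1)` as its order. -/
lemma my_descent (hp : p.Prime) (ψ : LaurentSeries k →+* LaurentSeries k) :
    ∀ M : ℕ, ∀ c : PowerSeries k, PowerSeries.constantCoeff c = 0 →
      ψ ((HahnSeries.ofPowerSeries ℤ k) c) ≠ 0 →
      (ψ ((HahnSeries.ofPowerSeries ℤ k) c)).order ≠ -((M : ℤ) + 1) := by
  intro M
  induction M using Nat.strong_induction_on with
  | _ M IH =>
    intro c hc hne hord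
    obtain ⟨y, hy0, hyc⟩ := my_AS_root hp c hc
    set Y : LaurentSeries k := ψ ((HahnSeries.ofPowerSeries ℤ k) y) with hYdef
    set W : LaurentSeries k := ψ ((HahnSeries.ofPowerSeries ℤ k) c) with hWdef
    have hYW : Y ^ p - Y = W := by
      rw [hYdef, hWdef, ← map_pow, ← map_sub, ← map_pow, ← map_sub, hyc]
    have hYne : Y ≠ 0 := by
      intro h
      rw [h] at hYW
      simp only [ne_eq, zero_pow hp.ne_zero, sub_zero] at hYW
      exact hne hYW.symm
    have hWcoeff : W.coeff (-((M : ℤ) + 1)) ≠ 0 := by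
      rw [← hord]; exact mt HahnSeries.coeff_order_eq_zero.mp hne
    have hYneg : Y.order < 0 := by
      by_contra hge
      push_neg at hge
      have hYp : (0:ℤ) ≤ (Y ^ p).order := by
        rw [HahnSeries.order_pow]
        positivity
      have h1 : (Y ^ p).coeff (-((M : ℤ) + 1)) = 0 :=
        HahnSeries.coeff_eq_zero_of_lt_order (by omega)
      have h2 : Y.coeff (-((M : ℤ) + 1)) = 0 :=
        HahnSeries.coeff_eq_zero_of_lt_order (by omega)
      apply hWcoeff
      rw [← hYW, HahnSeries.coeff_sub, h1, h2, sub_zero]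
    set B : ℤ := Y.order with hBdef
    have hYpord : (Y ^ p).order = p * B := by
      rw [HahnSeries.order_pow]; simp [hBdef, zsmul_eq_mul]
    have hYpne : Y ^ p ≠ 0 := pow_ne_zero _ hYne
    have hpB : (p : ℤ) * B < B := by
      have h2 : (2 : ℤ) ≤ p := by exact_mod_cast hp.two_le
      nlinarith
    have hWpB : W.coeff ((p : ℤ) * B) ≠ 0 := by
      rw [← hYW]
      have h2 : Y.coeff ((p : ℤ) * B) = 0 :=
        HahnSeries.coeff_eq_zero_of_lt_order (by omega)
      have h1 : (Y ^ p).coeff ((p : ℤ) * B) = (Y.leadingCoeff) ^ p := by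
        rw [← hYpord, ← HahnSeries.leadingCoeff_eq, my_leadingCoeff_pow Y hYne]
      rw [HahnSeries.coeff_sub, h1, h2, sub_zero]
      exact pow_ne_zero _ (HahnSeries.leadingCoeff_ne_zero.mpr hYne)
    have hWlow : ∀ j : ℤ, j < (p:ℤ) * B → W.coeff j = 0 := by
      intro j hj
      rw [← hYW, HahnSeries.coeff_sub,
        HahnSeries.coeff_eq_zero_of_lt_order (by rw [hYpord]; omega),
        HahnSeries.coeff_eq_zero_of_lt_order (by omega), sub_zero]
    have hWord : W.order = (p:ℤ) * B := by
      apply le_antisymm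
      · exact HahnSeries.order_le_of_coeff_ne_zero hWpB
      · by_contra hlt
        push_neg at hlt
        exact (mt HahnSeries.coeff_order_eq_zero.mp hne) (hWlow _ hlt)
    rw [hord] at hWord
    obtain ⟨M', hM'⟩ : ∃ M' : ℕ, B = -((M' : ℤ) + 1) := ⟨(-B - 1).toNat, by omega⟩
    have hM'M : M' < M := by
      have h2 : (2 : ℤ) ≤ p := by exact_mod_cast hp.two_le
      have := hWord
      rw [hM'] at this
      -- -(M+1) = p * (-(M'+1))
      nlinarith [this]
    exact IH M' hM'M y hy0 hYne (by rw [← hBdef, hM'])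

/-- main rigidity: ψ maps power series to power series -/
lemma my_rigidity (hp : p.Prime) (ψ : LaurentSeries k →+* LaurentSeries k)
    (hC : ∀ a : k, ψ (HahnSeries.C a) = HahnSeries.C a) (c : PowerSeries k) :
    ∃ d : PowerSeries k, ψ ((HahnSeries.ofPowerSeries ℤ k) c) =
      (HahnSeries.ofPowerSeries ℤ k) d := by
  set a : k := PowerSeries.constantCoeff c with hadef
  set c₁ : PowerSeries k := c - PowerSeries.C a with hc1def
  have hc1 : PowerSeries.constantCoeff c₁ = 0 := by
    rw [hc1def, map_sub, PowerSeries.constantCoeff_C, sub_self]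
  have hsplit : ψ ((HahnSeries.ofPowerSeries ℤ k) c)
      = HahnSeries.C a + ψ ((HahnSeries.ofPowerSeries ℤ k) c₁) := by
    rw [hc1def, map_sub, map_sub, HahnSeries.ofPowerSeries_C, hC]
    ring
  have hneg : ∀ j : ℤ, j < 0 → (ψ ((HahnSeries.ofPowerSeries ℤ k) c₁)).coeff j = 0 := by
    intro j hj
    by_cases h0 : ψ ((HahnSeries.ofPowerSeries ℤ k) c₁) = 0
    · rw [h0]; rfl
    · by_contra hco
      have hord := HahnSeries.order_le_of_coeff_ne_zero hco
      have hordneg : (ψ ((HahnSeries.ofPowerSeries ℤ k) c₁)).order < 0 := by omega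
      obtain ⟨M, hM⟩ : ∃ M : ℕ, (ψ ((HahnSeries.ofPowerSeries ℤ k) c₁)).order
          = -((M : ℤ) + 1) := ⟨(-(ψ ((HahnSeries.ofPowerSeries ℤ k) c₁)).order - 1).toNat, by omega⟩
      exact my_descent hp ψ M c₁ hc1 h0 hM
  obtain ⟨d₁, hd₁⟩ := my_exists_ofPS _ hneg
  refine ⟨PowerSeries.C a + d₁, ?_⟩
  rw [hsplit, hd₁, map_add, HahnSeries.ofPowerSeries_C]

end Descent

end Helpers
section Binom

variable {k : Type*} [Field k]

lemma my_binomial (x : ℕ) :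
    (1 + PowerSeries.X : PowerSeries k) ^ x - 1
      = PowerSeries.X * PowerSeries.mk (fun i => ((x.choose (i + 1) : ℕ) : k)) := by
  have hpoly : ((1 + PowerSeries.X : PowerSeries k)) ^ x
      = (((1 + Polynomial.X : Polynomial k) ^ x : Polynomial k) : PowerSeries k) := by
    rw [Polynomial.coe_pow, Polynomial.coe_add, Polynomial.coe_one, Polynomial.coe_X]
  ext j
  rcases j with _ | j
  · rw [map_sub, PowerSeries.coeff_zero_X_mul, hpoly, PowerSeries.coeff_zero_eq_constantCoeff,
      Polynomial.constantCoeff_coe, Polynomial.coeff_one_add_X_pow, Nat.choose_zero_right]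
    simp
  · rw [map_sub, PowerSeries.coeff_succ_X_mul, PowerSeries.coeff_mk, hpoly,
      Polynomial.coeff_coe, Polynomial.coeff_one_add_X_pow]
    have h1 : (PowerSeries.coeff (j + 1)) (1 : PowerSeries k) = 0 := by
      simp [PowerSeries.coeff_one]
    rw [h1, sub_zero]

end Binom

/-- a one-dimensional étale `(φ^r, Γ)`-module `D` over `k((t))` (with `k` a
finite field of characteristic `p`), with basis `g` satisfying
`φ^r g = ξ t^{n+1-p^r} g` for `ξ ∈ k^×`, `1 ≤ n ≤ p^r - 1`, and with `Γ` acting on `g`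
modulo `t·k[[t]]·g` through `x ↦ x^s`, satisfies `n ≡ 0 mod (p-1)`. -/
theorem stmt_2 (p r n s : ℕ) (hp : p.Prime) (hr : 1 ≤ r)
    (k : Type*) [Field k] [Fintype k] [CharP k p]
    (hn1 : 1 ≤ n) (hn2 : n ≤ p ^ r - 1) (hs : s ≤ p - 2)
    (D : Type*) [AddCommGroup D] [Module (LaurentSeries k) D]
    (g : D) (hg : g ≠ 0) (hgen : ∀ d : D, ∃ c : LaurentSeries k, d = c • g)
    -- the `r`-fold Frobenius `φ^r` on `k((t))`: `k`-linear, `t ↦ t^{p^r}`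
    (φK : LaurentSeries k →+* LaurentSeries k)
    (hφKC : ∀ a : k, φK (HahnSeries.C a) = HahnSeries.C a)
    (hφKt : φK (HahnSeries.single (1 : ℤ) (1 : k)) =
      HahnSeries.single (1 : ℤ) (1 : k) ^ (p ^ r))
    -- the semilinear structure map `φ^r_D` of `D`
    (φD : D →+ D)
    (hφsem : ∀ (c : LaurentSeries k) (d : D), φD (c • d) = φK c • φD d)
    (ξ : k) (hξ : ξ ≠ 0)
    (hφg : φD g = (HahnSeries.C ξ *
      (HahnSeries.single (1 : ℤ) (1 : k) : LaurentSeries k) ^ ((n : ℤ) + 1 - (p ^ r : ℤ))) • g)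
    -- the action of `γ(x)` for `x ∈ 𝔽_p^×` (via its integer representative in `[1,p-1]`)
    (γK : ℕ → LaurentSeries k →+* LaurentSeries k)
    (γD : ℕ → D →+ D)
    (hγKC : ∀ x, 1 ≤ x → x ≤ p - 1 → ∀ a : k, γK x (HahnSeries.C a) = HahnSeries.C a)
    (hγKt : ∀ x, 1 ≤ x → x ≤ p - 1 →
      γK x (HahnSeries.single (1 : ℤ) (1 : k)) =
        (1 + HahnSeries.single (1 : ℤ) (1 : k) : LaurentSeries k) ^ x - 1)
    (hγsem : ∀ x, 1 ≤ x → x ≤ p - 1 → ∀ (c : LaurentSeries k) (d : D),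
      γD x (c • d) = γK x c • γD x d)
    (hcomm : ∀ x, 1 ≤ x → x ≤ p - 1 → ∀ d : D, γD x (φD d) = φD (γD x d))
    -- `γ(x) g ≡ x^s g` modulo `t·k[[t]]·g`
    (hγg : ∀ x, 1 ≤ x → x ≤ p - 1 → ∃ f : PowerSeries k,
      γD x g - (HahnSeries.C ((x : k) ^ s) : LaurentSeries k) • g
        = ((HahnSeries.ofPowerSeries ℤ k) (PowerSeries.X * f)) • g) :
    (p - 1) ∣ n := by

  haveI : Fact p.Prime := ⟨hp⟩
  -- choose a primitive root x mod p
  obtain ⟨ζ, hζ⟩ := IsCyclic.exists_generator (α := (ZMod p)ˣ)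
  set x : ℕ := (ζ : ZMod p).val with hxdef
  have hpx : (ζ : ZMod p) ≠ 0 := ζ.ne_zero
  have hx1 : 1 ≤ x := Nat.pos_of_ne_zero (fun h => hpx (by rwa [ZMod.val_eq_zero] at h))
  have hxlt : x < p := ZMod.val_lt _
  have hx2 : x ≤ p - 1 := by omega
  have hxk : ((x : ℕ) : k) ≠ 0 := by
    rw [Ne, CharP.cast_eq_zero_iff k p]
    intro hdvd
    have := Nat.le_of_dvd (by omega) hdvd
    omega
  -- order of x in k is p - 1
  have hord : orderOf ((x : ℕ) : k) = p - 1 := by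
    have hinj : Function.Injective (ZMod.castHom (dvd_refl p) k) :=
      (ZMod.castHom (dvd_refl p) k).injective
    have h1 : orderOf (Units.map (ZMod.castHom (dvd_refl p) k).toMonoidHom ζ) = orderOf ζ :=
      orderOf_injective _ (Units.map_injective hinj) ζ
    have h2 : ((Units.map (ZMod.castHom (dvd_refl p) k).toMonoidHom ζ : kˣ) : k)
        = ((x : ℕ) : k) := by
      rw [hxdef, ZMod.natCast_val, Units.coe_map]
      rfl
    rw [← h2, orderOf_units, h1, orderOf_eq_card_of_forall_mem_zpowers hζ, Nat.card_eq_fintype_card, ZMod.card_units p]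
  -- the Γ-action data
  obtain ⟨f, hf⟩ := hγg x hx1 hx2
  set T : LaurentSeries k := HahnSeries.single (1 : ℤ) (1 : k) with hTdef
  set zN : ℤ := (n : ℤ) + 1 - (p ^ r : ℤ) with hzNdef
  set Cxs : LaurentSeries k := HahnSeries.C (((x : ℕ) : k) ^ s) with hCxsdef
  set F : LaurentSeries k := (HahnSeries.ofPowerSeries ℤ k) (PowerSeries.X * f) with hFdef
  have hu : γD x g = (Cxs + F) • g := by
    rw [sub_eq_iff_eq_add] at hf
    rw [hf, add_smul, add_comm]
  -- the key scalar identity from the commutation relation on g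
  have hγscalar : γK x (HahnSeries.C ξ * T ^ zN)
      = HahnSeries.C ξ * ((1 + T) ^ x - 1) ^ zN := by
    rw [map_mul, hγKC x hx1 hx2, map_zpow₀, hγKt x hx1 hx2]
  have hφCF : φK (Cxs + F) = Cxs + φK F := by rw [map_add, hCxsdef, hφKC]
  have hcancel : ∀ a b : LaurentSeries k, a • g = b • g → a = b := by
    intro a b hab
    by_contra hne
    have h1 : (a - b) • g = 0 := by rw [sub_smul, hab, sub_self]
    have h2 : a - b ≠ 0 := sub_ne_zero_of_ne hne
    apply hg
    calc g = (a - b)⁻¹ • ((a - b) • g) := by rw [smul_smul, inv_mul_cancel₀ h2, one_smul]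
    _ = 0 := by rw [h1, smul_zero]
  have hcg := hcomm x hx1 hx2 g
  rw [hφg, hγsem x hx1 hx2, hγscalar, hu, hφsem, hφg, hφCF, smul_smul, smul_smul] at hcg
  have E0 := hcancel _ _ hcg
  have hCξ : (HahnSeries.C ξ : LaurentSeries k) ≠ 0 := by
    rw [Ne, map_eq_zero_iff _ HahnSeries.C_injective]
    exact hξ
  have E1 : ((1 + T) ^ x - 1) ^ zN * (Cxs + F) = (Cxs + φK F) * T ^ zN := by
    apply mul_left_cancel₀ hCξ
    linear_combination E0
  -- binomial factorization
  set V : PowerSeries k := PowerSeries.mk (fun i => ((x.choose (i + 1) : ℕ) : k)) with hVdef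
  set v : LaurentSeries k := (HahnSeries.ofPowerSeries ℤ k) V with hvdef
  have hTx : (1 + T) ^ x - 1 = T * v := by
    have h1 : (1 + T : LaurentSeries k)
        = (HahnSeries.ofPowerSeries ℤ k) (1 + PowerSeries.X) := by
      rw [map_add, map_one, HahnSeries.ofPowerSeries_X]
    rw [h1, ← map_pow, show (1 : LaurentSeries k) = (HahnSeries.ofPowerSeries ℤ k) 1 from
      (map_one _).symm, ← map_sub, my_binomial x, map_mul, HahnSeries.ofPowerSeries_X]
  have hV0 : PowerSeries.constantCoeff V = ((x : ℕ) : k) := by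
    rw [hVdef, ← PowerSeries.coeff_zero_eq_constantCoeff, PowerSeries.coeff_mk]
    norm_num
  have hvne : v ≠ 0 := by
    intro h
    have hV : V = 0 := HahnSeries.ofPowerSeries_injective (by rw [← hvdef, h, map_zero])
    rw [hV, map_zero] at hV0
    exact hxk hV0.symm
  have hTne : T ≠ 0 := HahnSeries.single_ne_zero one_ne_zero
  have hTzne : T ^ zN ≠ 0 := zpow_ne_zero _ hTne
  have E2 : v ^ zN * (Cxs + F) = Cxs + φK F := by
    apply mul_left_cancel₀ hTzne
    have hmz : ((1 + T) ^ x - 1) ^ zN = T ^ zN * v ^ zN := by rw [hTx, mul_zpow]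
    calc T ^ zN * (v ^ zN * (Cxs + F)) = ((1 + T) ^ x - 1) ^ zN * (Cxs + F) := by
          rw [hmz]; ring
    _ = (Cxs + φK F) * T ^ zN := E1
    _ = T ^ zN * (Cxs + φK F) := by ring
  set M : ℕ := p ^ r - 1 - n with hMdef
  have hprpos : 1 ≤ p ^ r := Nat.one_le_pow _ _ hp.pos
  have hzM : (M : ℤ) + zN = 0 := by
    have hpows : ((p ^ r : ℕ) : ℤ) = (p : ℤ) ^ r := by push_cast; ring
    rw [hzNdef, hMdef]
    omega
  have E3 : Cxs + F = v ^ M * (Cxs + φK F) := by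
    have h1 : v ^ ((M : ℤ)) * v ^ zN = 1 := by rw [← zpow_add₀ hvne, hzM, zpow_zero]
    calc Cxs + F = (v ^ ((M : ℤ)) * v ^ zN) * (Cxs + F) := by rw [h1, one_mul]
    _ = v ^ ((M : ℤ)) * (v ^ zN * (Cxs + F)) := by ring
    _ = v ^ ((M : ℤ)) * (Cxs + φK F) := by rw [E2]
    _ = v ^ M * (Cxs + φK F) := by rw [zpow_natCast]
  -- rigidity
  obtain ⟨g₀, hg₀⟩ := my_rigidity hp φK hφKC f
  have hH : φK F = (HahnSeries.ofPowerSeries ℤ k) (PowerSeries.X ^ (p ^ r) * g₀) := by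
    have h1 : F = T * (HahnSeries.ofPowerSeries ℤ k) f := by
      rw [hFdef, map_mul, HahnSeries.ofPowerSeries_X]
    rw [h1, map_mul, hφKt, hg₀, map_mul, map_pow, HahnSeries.ofPowerSeries_X]
  -- transfer to power series and take constant coefficients
  have hLHS : (HahnSeries.ofPowerSeries ℤ k)
        (PowerSeries.C (((x : ℕ) : k) ^ s) + PowerSeries.X * f) = Cxs + F := by
    rw [map_add, HahnSeries.ofPowerSeries_C, ← hCxsdef, ← hFdef]
  have hRHS : (HahnSeries.ofPowerSeries ℤ k) (V ^ M * (PowerSeries.C (((x : ℕ) : k) ^ s)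
      + PowerSeries.X ^ (p ^ r) * g₀)) = v ^ M * (Cxs + φK F) := by
    rw [map_mul, map_pow, map_add, HahnSeries.ofPowerSeries_C, ← hCxsdef, ← hH, ← hvdef]
  have E4 : PowerSeries.C (((x : ℕ) : k) ^ s) + PowerSeries.X * f
      = V ^ M * (PowerSeries.C (((x : ℕ) : k) ^ s) + PowerSeries.X ^ (p ^ r) * g₀) := by
    apply HahnSeries.ofPowerSeries_injective (Γ := ℤ)
    rw [hLHS, hRHS]
    exact E3
  have E5 := congrArg (PowerSeries.constantCoeff) E4
  simp only [map_add, map_mul, map_pow, PowerSeries.constantCoeff_C,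
    PowerSeries.constantCoeff_X, hV0] at E5
  rw [zero_mul, add_zero, zero_pow (by positivity), zero_mul, add_zero] at E5
  -- E5 : x^s = x^M * x^s
  have hxs : ((x : ℕ) : k) ^ s ≠ 0 := pow_ne_zero _ hxk
  have hxM : ((x : ℕ) : k) ^ M = 1 := by
    have h1 : ((x : ℕ) : k) ^ M * ((x : ℕ) : k) ^ s = 1 * ((x : ℕ) : k) ^ s := by
      rw [one_mul]; exact E5.symm
    exact mul_right_cancel₀ hxs h1
  have hdvdM : (p - 1) ∣ M := hord ▸ orderOf_dvd_of_pow_eq_one hxM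
  have hdvdpr : (p - 1) ∣ p ^ r - 1 := by
    have := Nat.sub_dvd_pow_sub_pow p 1 r
    simpa using this
  have hnM : n = (p ^ r - 1) - M := by omega
  rw [hnM]
  exact Nat.dvd_sub hdvdpr hdvdM
end

section
/- Let r be even. On the set 𝔖̃_D(r) of triples (n,s,ξ) with n = Σ_{i=0}^{r-1} k_i p^i, 1 ≤ n ≤ p^r−2, n ≡ 0 mod (p−1), k_i = k_{i+r/2} for all 1 ≤ i ≤ r/2 − 2, 0 ≤ s ≤ p−2, ξ ∈ k^×, define ι_0 by swapping the digit quadruple (k_0, k_{r/2-1}, k_{r/2}, k_{r-1}) to (k_{r/2}, k_{r-1}, k_0, k_{r/2-1}) and replacing s by s + Σ_{i=0}^{r/2-1} k_i. Then ι_0 is a well-defined involution of 𝔖̃_D(r): ι_0² = id. -/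
def pDigit (p a i : ℕ) : ℕ := a / p ^ i % p

def iota0N (p r a : ℕ) : ℕ :=
  pDigit p a (r / 2) + (∑ i ∈ Finset.Ico 1 (r / 2 - 1), pDigit p a i * p ^ i)
    + pDigit p a (r - 1) * p ^ (r / 2 - 1) + pDigit p a 0 * p ^ (r / 2)
    + (∑ i ∈ Finset.Ico (r / 2 + 1) (r - 1), pDigit p a i * p ^ i)
    + pDigit p a (r / 2 - 1) * p ^ (r - 1)

def iota0S (p r a t : ℕ) : ℕ := (t + ∑ i ∈ Finset.range (r / 2), pDigit p a i) % (p - 1)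

lemma pDigit_lt {p : ℕ} (hp : 1 < p) (a i : ℕ) : pDigit p a i < p :=
  Nat.mod_lt _ (by omega)

lemma sum_pDigit (p n r : ℕ) :
    ∑ i ∈ Finset.range r, pDigit p n i * p ^ i = n % p ^ r := by
  induction r with
  | zero => simp [Nat.mod_one]
  | succ r ih =>
    rw [Finset.sum_range_succ, ih, Nat.mod_pow_succ]
    unfold pDigit; ring

lemma digits_of_sum (p : ℕ) (hp : 1 < p) :
    ∀ (r : ℕ) (c : ℕ → ℕ), (∀ i, i < r → c i < p) →
      (∑ i ∈ Finset.range r, c i * p ^ i) < p ^ r ∧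
      ∀ j, j < r → pDigit p (∑ i ∈ Finset.range r, c i * p ^ i) j = c j := by
  intro r
  induction r with
  | zero => intro c _; simp
  | succ r ih =>
    intro c hc
    obtain ⟨hM1, hM2⟩ := ih (fun i => c (i+1)) (fun i hi => hc (i+1) (by omega))
    set M := ∑ i ∈ Finset.range r, c (i+1) * p ^ i with hMdef
    have harg : ∀ i : ℕ, c (i+1) * p ^ (i+1) = p * (c (i+1) * p ^ i) := fun i => by ring
    have hN : ∑ i ∈ Finset.range (r+1), c i * p ^ i = p * M + c 0 := by
      rw [Finset.sum_range_succ']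
      simp only [harg, ← Finset.mul_sum, pow_zero, mul_one]
      rfl
    have hc0 := hc 0 (by omega)
    have hlt : p * M + c 0 < p ^ (r+1) := by
      calc p * M + c 0 < p * M + p := by omega
        _ = p * (M + 1) := by ring
        _ ≤ p * p ^ r := Nat.mul_le_mul_left p hM1
        _ = p ^ (r+1) := by rw [pow_succ]; ring
    refine ⟨by rw [hN]; exact hlt, ?_⟩
    intro j hj
    rw [hN]
    cases j with
    | zero =>
      show (p * M + c 0) / p ^ 0 % p = c 0
      simp [Nat.mul_add_mod, Nat.mod_eq_of_lt hc0]
    | succ j =>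
      have hdiv : (p * M + c 0) / p ^ (j+1) = M / p ^ j := by
        rw [pow_succ, mul_comm (p ^ j) p, ← Nat.div_div_eq_div_mul,
          Nat.mul_add_div (by omega), Nat.div_eq_of_lt hc0, add_zero]
      show (p * M + c 0) / p ^ (j+1) % p = c (j+1)
      rw [hdiv]
      exact hM2 j (by omega)

lemma geom_digits (p : ℕ) (hp : 1 ≤ p) (r : ℕ) :
    ∑ i ∈ Finset.range r, (p - 1) * p ^ i = p ^ r - 1 := by
  induction r with
  | zero => simp
  | succ r ih =>
    rw [Finset.sum_range_succ, ih, pow_succ]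
    have h1 : 1 ≤ p ^ r := Nat.one_le_pow _ _ (by omega)
    have h2 : (p - 1) * p ^ r = p * p ^ r - p ^ r := by
      rw [Nat.sub_mul, one_mul]
    have h3 : p ^ r ≤ p * p ^ r := Nat.le_mul_of_pos_left _ (by omega)
    have h4 : p ^ r * p = p * p ^ r := by ring
    omega

def sig (m i : ℕ) : ℕ :=
  if i = 0 then m else if i = m then 0 else if i = m - 1 then 2*m - 1
  else if i = 2*m - 1 then m - 1 else i

lemma sig_invol {m : ℕ} (hm : 2 ≤ m) (i : ℕ) : sig m (sig m i) = i := by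
  unfold sig; split_ifs <;> omega

lemma sig_lt {m : ℕ} (hm : 2 ≤ m) {i : ℕ} (h : i < 2*m) : sig m i < 2*m := by
  unfold sig; split_ifs <;> omega

lemma sig_0 {m : ℕ} (hm : 2 ≤ m) : sig m 0 = m := by unfold sig; split_ifs <;> omega
lemma sig_m {m : ℕ} (hm : 2 ≤ m) : sig m m = 0 := by unfold sig; split_ifs <;> omega
lemma sig_m1 {m : ℕ} (hm : 2 ≤ m) : sig m (m-1) = 2*m-1 := by unfold sig; split_ifs <;> omega
lemma sig_top {m : ℕ} (hm : 2 ≤ m) : sig m (2*m-1) = m-1 := by unfold sig; split_ifs <;> omega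
lemma sig_id {m i : ℕ} (hm : 2 ≤ m) (h0 : i ≠ 0) (h1 : i ≠ m) (h2 : i ≠ m-1) (h3 : i ≠ 2*m-1) :
    sig m i = i := by unfold sig; split_ifs <;> omega

lemma Ico_single (a : ℕ) (f : ℕ → ℕ) : ∑ i ∈ Finset.Ico a (a+1), f i = f a := by
  have : Finset.Ico a (a+1) = {a} := by ext x; simp [Nat.lt_succ_iff, Nat.le_antisymm_iff]
  simp [this]

lemma sum_decomp (m : ℕ) (hm : 2 ≤ m) (f : ℕ → ℕ) :
    ∑ i ∈ Finset.range (2*m), f i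
      = f 0 + (∑ i ∈ Finset.Ico 1 (m-1), f i) + f (m-1) + f m
        + (∑ i ∈ Finset.Ico (m+1) (2*m-1), f i) + f (2*m-1) := by
  rw [Finset.range_eq_Ico, ← Ico_single 0 f, ← Ico_single (m-1) f, ← Ico_single m f,
    ← Ico_single (2*m-1) f]
  rw [show (m-1)+1 = m from by omega, show (2*m-1)+1 = 2*m from by omega]
  rw [Finset.sum_Ico_consecutive f (by omega : (0:ℕ) ≤ 0+1) (by omega : 0+1 ≤ m-1)]
  rw [Finset.sum_Ico_consecutive f (by omega : (0:ℕ) ≤ m-1) (by omega : m-1 ≤ m)]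
  rw [Finset.sum_Ico_consecutive f (by omega : (0:ℕ) ≤ m) (by omega : m ≤ m+1)]
  rw [Finset.sum_Ico_consecutive f (by omega : (0:ℕ) ≤ m+1) (by omega : m+1 ≤ 2*m-1)]
  rw [Finset.sum_Ico_consecutive f (by omega : (0:ℕ) ≤ 2*m-1) (by omega : 2*m-1 ≤ 2*m)]

lemma sum_decomp3 (m : ℕ) (hm : 2 ≤ m) (f : ℕ → ℕ) :
    ∑ i ∈ Finset.range m, f i
      = f 0 + (∑ i ∈ Finset.Ico 1 (m-1), f i) + f (m-1) := by
  rw [Finset.range_eq_Ico, ← Ico_single 0 f, ← Ico_single (m-1) f]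
  rw [show (m-1)+1 = m from by omega]
  rw [Finset.sum_Ico_consecutive f (by omega : (0:ℕ) ≤ 0+1) (by omega : 0+1 ≤ m-1)]
  rw [Finset.sum_Ico_consecutive f (by omega : (0:ℕ) ≤ m-1) (by omega : m-1 ≤ m)]

lemma iota0N_eq (p m a : ℕ) (hm : 2 ≤ m) :
    iota0N p (2*m) a = ∑ j ∈ Finset.range (2*m), pDigit p a (sig m j) * p ^ j := by
  rw [sum_decomp m hm]
  unfold iota0N
  have hmm : 2*m/2 = m := by omega
  simp only [hmm]
  have hS1 : ∑ i ∈ Finset.Ico 1 (m-1), pDigit p a (sig m i) * p ^ i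
      = ∑ i ∈ Finset.Ico 1 (m-1), pDigit p a i * p ^ i := by
    refine Finset.sum_congr rfl (fun i hi => ?_)
    have hi' := Finset.mem_Ico.mp hi
    rw [sig_id hm (by omega) (by omega) (by omega) (by omega)]
  have hS2 : ∑ i ∈ Finset.Ico (m+1) (2*m-1), pDigit p a (sig m i) * p ^ i
      = ∑ i ∈ Finset.Ico (m+1) (2*m-1), pDigit p a i * p ^ i := by
    refine Finset.sum_congr rfl (fun i hi => ?_)
    have hi' := Finset.mem_Ico.mp hi
    rw [sig_id hm (by omega) (by omega) (by omega) (by omega)]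
  rw [hS1, hS2, sig_0 hm, sig_m hm, sig_m1 hm, sig_top hm,
    show 2*m-1 = m + (m-1) from by omega]
  ring

/-- for `r` even, `ι₀` is a well-defined involution of `𝔖̃_D(r)`
(the set of `(n,s,ξ)` with `1 ≤ n ≤ p^r-2`, `n ≡ 0 mod (p-1)`,
`k_i = k_{i+r/2}` for `1 ≤ i ≤ r/2-2`, `0 ≤ s ≤ p-2`, `ξ ∈ k^×`): `ι₀² = id`. -/
theorem stmt_5 (p r : ℕ) (hp : p.Prime) (hr4 : 4 ≤ r) (hre : Even r)
    (k : Type*) [Field k] (n s : ℕ) (ξ : kˣ)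
    (hn1 : 1 ≤ n) (hn2 : n ≤ p ^ r - 2) (hdvd : (p - 1) ∣ n)
    (hper : ∀ i, 1 ≤ i → i ≤ r / 2 - 2 → pDigit p n i = pDigit p n (i + r / 2))
    (hs : s ≤ p - 2) :
    (1 ≤ iota0N p r n ∧ iota0N p r n ≤ p ^ r - 2 ∧ (p - 1) ∣ iota0N p r n
      ∧ (∀ i, 1 ≤ i → i ≤ r / 2 - 2 →
          pDigit p (iota0N p r n) i = pDigit p (iota0N p r n) (i + r / 2)))
    ∧ iota0N p r (iota0N p r n) = n
    ∧ iota0S p r (iota0N p r n) (iota0S p r n s) = s := by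
  have hr2 : r % 2 = 0 := Nat.even_iff.mp hre
  obtain ⟨m, rfl⟩ : ∃ m, r = 2 * m := ⟨r / 2, by omega⟩
  have hm2 : 2 ≤ m := by omega
  have hp1 : 1 < p := hp.one_lt
  have hmm : 2*m/2 = m := by omega
  simp only [hmm] at hper ⊢
  have hp2m : 1 < p ^ (2*m) := Nat.one_lt_pow (by omega) hp1
  have hnlt : n < p ^ (2*m) := by omega
  have hnsum : n = ∑ i ∈ Finset.range (2*m), pDigit p n i * p ^ i := by
    rw [sum_pDigit p n (2*m), Nat.mod_eq_of_lt hnlt]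
  set c : ℕ → ℕ := fun j => pDigit p n (sig m j) with hc
  have hclt : ∀ j, j < 2*m → c j < p := fun j _ => pDigit_lt hp1 _ _
  obtain ⟨hkey1, hkey2⟩ := digits_of_sum p hp1 (2*m) c hclt
  have hform : iota0N p (2*m) n = ∑ j ∈ Finset.range (2*m), c j * p ^ j :=
    iota0N_eq p m n hm2
  set n' := iota0N p (2*m) n with hn'def
  have hn'lt : n' < p ^ (2*m) := by rw [hform]; exact hkey1
  have hd : ∀ j, j < 2*m → pDigit p n' j = pDigit p n (sig m j) := fun j hj => by
    rw [hform]; exact hkey2 j hj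
  -- goal 1 : 1 ≤ n'
  have g1 : 1 ≤ n' := by
    rcases Nat.eq_zero_or_pos n' with h0 | h
    · exfalso
      have hz : ∀ i, i < 2*m → pDigit p n i = 0 := by
        intro i hi
        have h1 := hd (sig m i) (sig_lt hm2 hi)
        rw [sig_invol hm2] at h1
        rw [h0] at h1
        simpa [pDigit] using h1.symm
      have : n = 0 := by
        rw [hnsum]
        exact Finset.sum_eq_zero fun i hi => by
          rw [hz i (Finset.mem_range.mp hi)]; ring
      omega
    · exact h
  -- goal 2 : n' ≤ p^(2m) - 2
  have g2 : n' ≤ p ^ (2*m) - 2 := by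
    by_contra hcon
    have hn'eq : n' = p ^ (2*m) - 1 := by omega
    have hall : ∀ j, j < 2*m → c j = p - 1 := by
      intro j hj
      by_contra hne
      have hltj : c j < p - 1 := by have := hclt j hj; omega
      have : n' < p ^ (2*m) - 1 := by
        rw [hform, ← geom_digits p (by omega) (2*m)]
        refine Finset.sum_lt_sum (fun i hi => Nat.mul_le_mul_right _ ?_)
          ⟨j, Finset.mem_range.mpr hj, ?_⟩
        · have := hclt i (Finset.mem_range.mp hi); omega
        · exact (Nat.mul_lt_mul_right (pow_pos (by omega : 0 < p) j)).mpr hltj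
      omega
    have hkall : ∀ i, i < 2*m → pDigit p n i = p - 1 := by
      intro i hi
      have h1 := hall (sig m i) (sig_lt hm2 hi)
      simp only [hc] at h1
      rwa [sig_invol hm2] at h1
    have : n = p ^ (2*m) - 1 := by
      rw [hnsum,
        Finset.sum_congr rfl (fun i hi => by rw [hkall i (Finset.mem_range.mp hi)])]
      exact geom_digits p (by omega) (2*m)
    omega
  -- reindexing bijection
  have hbij : Function.Bijective (sig m) :=
    Function.Involutive.bijective (fun i => sig_invol hm2 i)
  have hmemiff : ∀ i : ℕ, i ∈ Finset.range (2*m) ↔ sig m i ∈ Finset.range (2*m) := by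
    intro i
    simp only [Finset.mem_range]
    constructor
    · exact fun h => sig_lt hm2 h
    · intro h
      have := sig_lt hm2 h
      rwa [sig_invol hm2] at this
  have hre2 : ∑ j ∈ Finset.range (2*m), c j = ∑ j ∈ Finset.range (2*m), pDigit p n j :=
    Finset.sum_bijective (sig m) hbij hmemiff (fun i _ => rfl)
  -- mod p - 1 congruence
  haveI : NeZero (p - 1) := ⟨by omega⟩
  have hcastp : ((p : ℕ) : ZMod (p-1)) = 1 := by
    rw [show p = (p-1) + 1 from by omega, Nat.cast_add, Nat.cast_one,
      ZMod.natCast_self, zero_add]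
  have hcast : ∀ (f : ℕ → ℕ),
      ((∑ j ∈ Finset.range (2*m), f j * p ^ j : ℕ) : ZMod (p-1))
        = ((∑ j ∈ Finset.range (2*m), f j : ℕ) : ZMod (p-1)) := by
    intro f
    push_cast
    exact Finset.sum_congr rfl fun j _ => by rw [hcastp]; ring
  have hncast : ((n : ℕ) : ZMod (p-1)) = ((∑ j ∈ Finset.range (2*m), pDigit p n j : ℕ) : ZMod (p-1)) := by
    conv_lhs => rw [hnsum]
    exact hcast _
  have g3 : (p - 1) ∣ n' := by
    rw [← ZMod.natCast_eq_zero_iff]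
    have e1 : ((n' : ℕ) : ZMod (p-1)) = ((n : ℕ) : ZMod (p-1)) := by
      rw [hform, hcast c, hncast]
      exact_mod_cast congrArg (Nat.cast : ℕ → ZMod (p-1)) hre2
    rw [e1, ZMod.natCast_eq_zero_iff]
    exact hdvd
  -- goal 4 : periodicity
  have g4 : ∀ i, 1 ≤ i → i ≤ m - 2 → pDigit p n' i = pDigit p n' (i + m) := by
    intro i h1 h2
    have hi1 : sig m i = i := sig_id hm2 (by omega) (by omega) (by omega) (by omega)
    have hi2 : sig m (i + m) = i + m := sig_id hm2 (by omega) (by omega) (by omega) (by omega)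
    rw [hd i (by omega), hd (i+m) (by omega), hi1, hi2]
    exact hper i h1 h2
  -- goal 5 : involution
  have g5 : iota0N p (2*m) n' = n := by
    rw [iota0N_eq p m n' hm2]
    conv_rhs => rw [hnsum]
    refine Finset.sum_congr rfl fun j hj => ?_
    have hj' := Finset.mem_range.mp hj
    rw [hd (sig m j) (sig_lt hm2 hj'), sig_invol hm2]
  -- goal 6 : s-component
  have g6 : iota0S p (2*m) n' (iota0S p (2*m) n s) = s := by
    unfold iota0S
    simp only [hmm]
    set A := ∑ i ∈ Finset.range m, pDigit p n i with hA
    set A' := ∑ i ∈ Finset.range m, pDigit p n' i with hA'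
    set B := ∑ i ∈ Finset.Ico 1 (m-1), pDigit p n i with hB
    have hAeq : A = pDigit p n 0 + B + pDigit p n (m-1) := sum_decomp3 m hm2 _
    have hA'2 : A' = ∑ i ∈ Finset.range m, pDigit p n (sig m i) :=
      Finset.sum_congr rfl fun i hi => hd i (by have := Finset.mem_range.mp hi; omega)
    have hA'eq : A' = pDigit p n m + B + pDigit p n (2*m-1) := by
      rw [hA'2, sum_decomp3 m hm2, sig_0 hm2, sig_m1 hm2]
      congr 1
      congr 1
      refine Finset.sum_congr rfl fun i hi => ?_
      have hi' := Finset.mem_Ico.mp hi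
      rw [sig_id hm2 (by omega) (by omega) (by omega) (by omega)]
    have hCB : ∑ i ∈ Finset.Ico (m+1) (2*m-1), pDigit p n i = B := by
      rw [hB, Finset.sum_Ico_eq_sum_range, Finset.sum_Ico_eq_sum_range,
        show 2*m-1 - (m+1) = m-1-1 from by omega]
      refine Finset.sum_congr rfl fun i hi => ?_
      have hi' := Finset.mem_range.mp hi
      have := hper (1+i) (by omega) (by omega)
      rw [show m+1+i = 1+i+m from by omega, ← this]
    have hS : ∑ j ∈ Finset.range (2*m), pDigit p n j = A + A' := by
      rw [sum_decomp m hm2, hCB, hAeq, hA'eq]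
      ring
    have hdvdAA : (p - 1) ∣ (A + A') := by
      rw [← ZMod.natCast_eq_zero_iff, ← hS, ← hncast,
        ZMod.natCast_eq_zero_iff]
      exact hdvd
    obtain ⟨t, ht⟩ := hdvdAA
    rw [Nat.mod_add_mod, add_assoc, ht, Nat.add_mul_mod_self_left,
      Nat.mod_eq_of_lt (by omega)]
  exact ⟨⟨g1, g2, g3, g4⟩, g5, g6⟩
end

section
/- In Sp_{2d}(ℚ_p) (defined with the symplectic form given by the matrix Ŝ_d with blocks (0, E_d; −E_d, 0)), let ṡ_i for 1 ≤ i ≤ d−1 be the block diagonal matrix diag(E_{i-1}, Ŝ_1, E_{d-i-1}, E_{i-1}, Ŝ_1, E_{d-i-1}), let ṡ_d be the matrix exchanging basis vectors e_d and e_{2d} with a sign (entry 1 at (d,2d), entry −1 at (2d,d), identity elsewhere), and let ṡ_0 be the matrix with entry −p^{-1} at (1,d+1), entry p at (d+1,1), identity elsewhere. Set φ = (p·id)·ṡ_d ṡ_{d-1} ⋯ ṡ_1 ṡ_0 in GSp_{2d}(ℚ_p). Then φ^d = (−1)^{d-1} diag(p^{d+1} E_d, p^{d-1} E_d). -/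
noncomputable section
open Matrix

/-- the lift `ṡ_i ∈ Sp_{2d}(ℚ_p)`, `1 ≤ i ≤ d-1` (0-indexed matrix entries):
`diag(E_{i-1}, Ŝ_1, E_{d-i-1}, E_{i-1}, Ŝ_1, E_{d-i-1})` with `Ŝ_1 = ((0,1),(-1,0))`. -/
def sC (p : ℕ) [Fact p.Prime] (d i : ℕ) : Matrix (Fin (2 * d)) (Fin (2 * d)) ℚ_[p] :=
  Matrix.of fun a b =>
    if (a.val = i - 1 ∧ b.val = i) ∨ (a.val = d + i - 1 ∧ b.val = d + i) then 1
    else if (a.val = i ∧ b.val = i - 1) ∨ (a.val = d + i ∧ b.val = d + i - 1) then -1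
    else if a = b ∧ a.val ≠ i - 1 ∧ a.val ≠ i ∧ a.val ≠ d + i - 1 ∧ a.val ≠ d + i then 1
    else 0

/-- the lift `ṡ_d`: entry `1` at `(d, 2d)`, entry `-1` at `(2d, d)` (1-indexed),
identity elsewhere. -/
def sCd (p : ℕ) [Fact p.Prime] (d : ℕ) : Matrix (Fin (2 * d)) (Fin (2 * d)) ℚ_[p] :=
  Matrix.of fun a b =>
    if a.val = d - 1 ∧ b.val = 2 * d - 1 then 1
    else if a.val = 2 * d - 1 ∧ b.val = d - 1 then -1
    else if a = b ∧ a.val ≠ d - 1 ∧ a.val ≠ 2 * d - 1 then 1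
    else 0

/-- the lift `ṡ_0`: entry `-p⁻¹` at `(1, d+1)`, entry `p` at `(d+1, 1)` (1-indexed),
identity elsewhere. -/
def sC0 (p : ℕ) [Fact p.Prime] (d : ℕ) : Matrix (Fin (2 * d)) (Fin (2 * d)) ℚ_[p] :=
  Matrix.of fun a b =>
    if a.val = 0 ∧ b.val = d then -(p : ℚ_[p])⁻¹
    else if a.val = d ∧ b.val = 0 then (p : ℚ_[p])
    else if a = b ∧ a.val ≠ 0 ∧ a.val ≠ d then 1
    else 0

/-- `φ = (p·id)·ṡ_d ṡ_{d-1} ⋯ ṡ_1 ṡ_0 ∈ GSp_{2d}(ℚ_p)`. -/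
def phiC (p : ℕ) [Fact p.Prime] (d : ℕ) : Matrix (Fin (2 * d)) (Fin (2 * d)) ℚ_[p] :=
  (p : ℚ_[p]) •
    (sCd p d * ((List.range (d - 1)).map (fun j => sC p d (d - 1 - j))).prod * sC0 p d)

set_option maxHeartbeats 1000000
namespace Stmt7Aux

/-- A "monomial" matrix: column `b` has (at most) one nonzero entry `c b.val` at row `f b.val`. -/
def mono (p d : ℕ) [Fact p.Prime] (f : ℕ → ℕ) (c : ℕ → ℚ_[p]) :
    Matrix (Fin (2 * d)) (Fin (2 * d)) ℚ_[p] :=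
  Matrix.of fun a b => if a.val = f b.val then c b.val else 0

lemma mono_mul (p d : ℕ) [Fact p.Prime] (f g : ℕ → ℕ) (c e : ℕ → ℚ_[p])
    (hg : ∀ x, x < 2 * d → g x < 2 * d) :
    mono p d f c * mono p d g e = mono p d (fun x => f (g x)) (fun x => c (g x) * e x) := by
  ext a b
  rw [Matrix.mul_apply]
  have hb : g b.val < 2 * d := hg _ b.isLt
  rw [Finset.sum_eq_single (⟨g b.val, hb⟩ : Fin (2 * d))]
  · by_cases h : a.val = f (g b.val) <;> simp [mono, h]
  · intro j _ hj
    have : j.val ≠ g b.val := fun h => hj (Fin.ext h)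
    simp [mono, this]
  · intro h; exact absurd (Finset.mem_univ _) h

lemma mono_congr (p d : ℕ) [Fact p.Prime] (f f' : ℕ → ℕ) (c c' : ℕ → ℚ_[p])
    (h : ∀ x, x < 2 * d → f x = f' x ∧ c x = c' x) :
    mono p d f c = mono p d f' c' := by
  ext a b
  obtain ⟨h1, h2⟩ := h b.val b.isLt
  simp [mono, h1, h2]

def nfI (d i : ℕ) : ℕ → ℕ := fun x =>
  if x = i then i - 1 else if x = i - 1 then i
  else if x = d + i then d + i - 1 else if x = d + i - 1 then d + i else x

def cI (p d i : ℕ) [Fact p.Prime] : ℕ → ℚ_[p] := fun x =>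
  if x = i - 1 ∨ x = d + i - 1 then -1 else 1

lemma sC_eq (p d i : ℕ) [Fact p.Prime] (hi : 1 ≤ i) (hi2 : i ≤ d - 1) (hd : 2 ≤ d) :
    sC p d i = mono p d (nfI d i) (cI p d i) := by
  ext a b
  have ha := a.isLt; have hb := b.isLt
  simp only [sC, mono, nfI, cI, Matrix.of_apply, Fin.ext_iff]
  split_ifs <;> first | rfl | omega | (exfalso; omega)

def nfD (d : ℕ) : ℕ → ℕ := fun x =>
  if x = d - 1 then 2 * d - 1 else if x = 2 * d - 1 then d - 1 else x

def cD (p d : ℕ) [Fact p.Prime] : ℕ → ℚ_[p] := fun x => if x = d - 1 then -1 else 1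

lemma sCd_eq (p d : ℕ) [Fact p.Prime] (hd : 2 ≤ d) :
    sCd p d = mono p d (nfD d) (cD p d) := by
  ext a b
  have ha := a.isLt; have hb := b.isLt
  simp only [sCd, mono, nfD, cD, Matrix.of_apply, Fin.ext_iff]
  split_ifs <;> first | rfl | omega | (exfalso; omega)

def nf0 (d : ℕ) : ℕ → ℕ := fun x => if x = d then 0 else if x = 0 then d else x

def c0 (p d : ℕ) [Fact p.Prime] : ℕ → ℚ_[p] := fun x =>
  if x = d then -(p : ℚ_[p])⁻¹ else if x = 0 then (p : ℚ_[p]) else 1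

lemma sC0_eq (p d : ℕ) [Fact p.Prime] (hd : 2 ≤ d) :
    sC0 p d = mono p d (nf0 d) (c0 p d) := by
  ext a b
  have ha := a.isLt; have hb := b.isLt
  simp only [sC0, mono, nf0, c0, Matrix.of_apply, Fin.ext_iff]
  split_ifs <;> first | rfl | omega | (exfalso; omega)

def nfP (d k : ℕ) : ℕ → ℕ := fun x =>
  if x = d - 1 - k then d - 1
  else if d - k ≤ x ∧ x ≤ d - 1 then x - 1
  else if x = 2 * d - 1 - k then 2 * d - 1
  else if 2 * d - k ≤ x ∧ x ≤ 2 * d - 1 then x - 1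
  else x

def cP (p d k : ℕ) [Fact p.Prime] : ℕ → ℚ_[p] := fun x =>
  if x = d - 1 - k ∨ x = 2 * d - 1 - k then (-1) ^ k else 1

lemma prodP (p d : ℕ) [Fact p.Prime] (hd : 2 ≤ d) :
    ∀ k, k ≤ d - 1 →
      ((List.range k).map (fun j => sC p d (d - 1 - j))).prod = mono p d (nfP d k) (cP p d k) := by
  intro k
  induction k with
  | zero =>
    intro _
    ext a b
    have ha := a.isLt; have hb := b.isLt
    simp only [List.range_zero, List.map_nil, List.prod_nil, mono, nfP, cP,
      Matrix.one_apply, Matrix.of_apply, Fin.ext_iff]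
    split_ifs <;> first | rfl | omega | (exfalso; omega) | norm_num
  | succ k ih =>
    intro hk
    rw [List.range_succ, List.map_append, List.prod_append, List.map_singleton,
      List.prod_singleton, ih (by omega), sC_eq p d (d - 1 - k) (by omega) (by omega) hd,
      mono_mul]
    · apply mono_congr
      intro x hx
      constructor
      · simp only [nfP, nfI]
        split_ifs <;> omega
      · simp only [nfP, nfI, cP, cI]
        split_ifs <;> first | rfl | (exfalso; omega) | ring1
    · intro x hx
      simp only [nfI]
      split_ifs <;> omega

def nfQ (d k : ℕ) : ℕ → ℕ := fun x =>
  if x < d then (if k ≤ x then x - k else x + d - k)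
  else (if k ≤ x - d then x - k else x + d - k)

def cQ (p d k : ℕ) [Fact p.Prime] : ℕ → ℚ_[p] := fun x =>
  if x < d then (if k ≤ x then 1 else (-1) ^ (d - 1) * p)
  else (if k ≤ x - d then 1 else (-1) ^ (d - 1) * (p : ℚ_[p])⁻¹)

lemma nfQ_lt (d k : ℕ) (hk : k ≤ d) : ∀ x, x < 2 * d → nfQ d k x < 2 * d := by
  intro x hx
  simp only [nfQ]
  split_ifs <;> omega

lemma Mtot_eq (p d : ℕ) [Fact p.Prime] (hd : 2 ≤ d) :
    sCd p d * ((List.range (d - 1)).map (fun j => sC p d (d - 1 - j))).prod * sC0 p d =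
      mono p d (nfQ d 1) (cQ p d 1) := by
  rw [sCd_eq p d hd, sC0_eq p d hd, prodP p d hd (d - 1) le_rfl, mono_mul, mono_mul]
  · apply mono_congr
    intro x hx
    constructor
    · simp only [nfP, nfD, nf0, nfQ]
      split_ifs <;> omega
    · simp only [nfP, nfD, nf0, nfQ, cP, cD, c0, cQ]
      split_ifs <;> first | rfl | (exfalso; omega) | ring1
  · intro x hx
    simp only [nf0]; split_ifs <;> omega
  · intro x hx
    simp only [nfP]; split_ifs <;> omega

lemma Mtot_pow (p d : ℕ) [Fact p.Prime] (hd : 2 ≤ d) :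
    ∀ k, 1 ≤ k → k ≤ d →
      mono p d (nfQ d 1) (cQ p d 1) ^ k = mono p d (nfQ d k) (cQ p d k) := by
  intro k
  induction k with
  | zero => intro h; omega
  | succ k ih =>
    intro _ hk
    rcases Nat.eq_or_lt_of_le (show 1 ≤ k + 1 from by omega) with h1 | h1
    · rw [← h1, pow_one]
    · rw [pow_succ, ih (by omega) (by omega), mono_mul]
      · apply mono_congr
        intro x hx
        constructor
        · simp only [nfQ]
          split_ifs <;> omega
        · simp only [nfQ, cQ]
          split_ifs <;> first | rfl | (exfalso; omega) | ring1
      · exact nfQ_lt d 1 (by omega)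

end Stmt7Aux

/-- `φ^d = (-1)^{d-1} diag(p^{d+1} E_d, p^{d-1} E_d)`. -/
theorem stmt_7 (p d : ℕ) [Fact p.Prime] (hd : 2 ≤ d) :
    phiC p d ^ d =
      ((-1 : ℚ_[p]) ^ (d - 1)) •
        Matrix.diagonal (fun a : Fin (2 * d) =>
          if a.val < d then (p : ℚ_[p]) ^ (d + 1) else (p : ℚ_[p]) ^ (d - 1)) := by
  have hp : (p : ℚ_[p]) ≠ 0 := Nat.cast_ne_zero.mpr (Fact.out (p := p.Prime)).ne_zero
  rw [phiC, smul_pow, Stmt7Aux.Mtot_eq p d hd, Stmt7Aux.Mtot_pow p d hd d (by omega) le_rfl]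
  ext a b
  have ha := a.isLt; have hb := b.isLt
  by_cases hab : a = b
  · subst hab
    simp only [Matrix.smul_apply, Stmt7Aux.mono, Stmt7Aux.nfQ, Stmt7Aux.cQ,
      Matrix.of_apply, Matrix.diagonal_apply_eq, smul_eq_mul]
    have h1 : (p : ℚ_[p]) ^ d * ((-1) ^ (d - 1) * p) = (-1) ^ (d - 1) * p ^ (d + 1) := by
      rw [show d + 1 = d + 1 from rfl, pow_succ]; ring
    have h2 : (p : ℚ_[p]) ^ d * ((-1) ^ (d - 1) * (p : ℚ_[p])⁻¹) =
        (-1) ^ (d - 1) * p ^ (d - 1) := by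
      have hpd : (p : ℚ_[p]) ^ d = p ^ (d - 1) * p := by rw [← pow_succ]; congr 1; omega
      rw [hpd]; field_simp
    split_ifs <;> first | rfl | (exfalso; omega) | exact h1 | exact h2
  · have hne : a.val ≠ b.val := fun h => hab (Fin.ext h)
    simp only [Matrix.smul_apply, Stmt7Aux.mono, Stmt7Aux.nfQ, Stmt7Aux.cQ,
      Matrix.of_apply, Matrix.diagonal_apply_ne _ hab, smul_eq_mul]
    split_ifs <;> first | (exfalso; omega) | simp
end
end

section
/- In SO_{2d+1}(ℚ_p), let ṡ_1,…,ṡ_{d-1} be diag(E_{i-1}, S_1, E_{d-i-1}, E_{i-1}, S_1, E_{d-i-1}, 1) with S_1 = ((0,1),(1,0)), let ṡ_d be the matrix exchanging basis vectors e_d and e_{2d}, with entry −1 at position (2d+1, 2d+1) and identity elsewhere; let u̇ have entry p^{-1} at (1,d+1), p at (d+1,1), −1 at (2d+1,2d+1), identity elsewhere, and ṡ_0 = u̇ ṡ_1 u̇. Define φ = ṡ_1 ṡ_2 ⋯ ṡ_{d-1} ṡ_d ṡ_{d-1} ⋯ ṡ_2 ṡ_0. Then φ² = diag(p², E_{d-1},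 p^{-2}, E_{d-1}, 1). -/
noncomputable section

open Matrix

/-- the lift `ṡ_i ∈ SO_{2d+1}(ℚ_p)`, `1 ≤ i ≤ d-1`:
`diag(E_{i-1}, S_1, E_{d-i-1}, E_{i-1}, S_1, E_{d-i-1}, 1)` with `S_1 = ((0,1),(1,0))`. -/
def sB (p : ℕ) [Fact p.Prime] (d i : ℕ) : Matrix (Fin (2 * d + 1)) (Fin (2 * d + 1)) ℚ_[p] :=
  Matrix.of fun a b =>
    if (a.val = i - 1 ∧ b.val = i) ∨ (a.val = i ∧ b.val = i - 1)
        ∨ (a.val = d + i - 1 ∧ b.val = d + i) ∨ (a.val = d + i ∧ b.val = d + i - 1) then 1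
    else if a = b ∧ a.val ≠ i - 1 ∧ a.val ≠ i ∧ a.val ≠ d + i - 1 ∧ a.val ≠ d + i then 1
    else 0

/-- the lift `ṡ_d`: exchanges `e_d` and `e_{2d}`, entry `-1` at `(2d+1, 2d+1)` (1-indexed),
identity elsewhere. -/
def sBd (p : ℕ) [Fact p.Prime] (d : ℕ) : Matrix (Fin (2 * d + 1)) (Fin (2 * d + 1)) ℚ_[p] :=
  Matrix.of fun a b =>
    if (a.val = d - 1 ∧ b.val = 2 * d - 1) ∨ (a.val = 2 * d - 1 ∧ b.val = d - 1) then 1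
    else if a.val = 2 * d ∧ b.val = 2 * d then -1
    else if a = b ∧ a.val ≠ d - 1 ∧ a.val ≠ 2 * d - 1 ∧ a.val ≠ 2 * d then 1
    else 0

/-- the element `u̇ ∈ SO_{2d+1}(ℚ_p)`: entry `p⁻¹` at `(1, d+1)`, `p` at `(d+1, 1)`,
`-1` at `(2d+1, 2d+1)` (1-indexed), identity elsewhere. -/
def uB (p : ℕ) [Fact p.Prime] (d : ℕ) : Matrix (Fin (2 * d + 1)) (Fin (2 * d + 1)) ℚ_[p] :=
  Matrix.of fun a b =>
    if a.val = 0 ∧ b.val = d then (p : ℚ_[p])⁻¹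
    else if a.val = d ∧ b.val = 0 then (p : ℚ_[p])
    else if a.val = 2 * d ∧ b.val = 2 * d then -1
    else if a = b ∧ a.val ≠ 0 ∧ a.val ≠ d ∧ a.val ≠ 2 * d then 1
    else 0

/-- `ṡ_0 = u̇ ṡ_1 u̇`. -/
def sB0 (p : ℕ) [Fact p.Prime] (d : ℕ) : Matrix (Fin (2 * d + 1)) (Fin (2 * d + 1)) ℚ_[p] :=
  uB p d * sB p d 1 * uB p d

/-- `φ = ṡ_1 ṡ_2 ⋯ ṡ_{d-1} ṡ_d ṡ_{d-1} ⋯ ṡ_2 ṡ_0`. -/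
def phiB (p : ℕ) [Fact p.Prime] (d : ℕ) : Matrix (Fin (2 * d + 1)) (Fin (2 * d + 1)) ℚ_[p] :=
  ((List.range (d - 1)).map (fun j => sB p d (j + 1))).prod * sBd p d
    * ((List.range (d - 2)).map (fun j => sB p d (d - 1 - j))).prod * sB0 p d

/-! ### Auxiliary machinery: weighted permutation matrices -/

set_option maxHeartbeats 1000000

/-- weighted permutation matrix: entry `w b` at position `(f b, b)`, zero elsewhere. -/
def W (p : ℕ) [Fact p.Prime] (d : ℕ) (f : ℕ → ℕ) (w : ℕ → ℚ_[p]) :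
    Matrix (Fin (2 * d + 1)) (Fin (2 * d + 1)) ℚ_[p] :=
  Matrix.of fun a b => if a.val = f b.val then w b.val else 0

lemma W_mul (p : ℕ) [Fact p.Prime] (d : ℕ) (f g : ℕ → ℕ) (w v : ℕ → ℚ_[p])
    (hg : ∀ m, m < 2 * d + 1 → g m < 2 * d + 1) :
    W p d f w * W p d g v = W p d (fun m => f (g m)) (fun m => w (g m) * v m) := by
  ext a b
  rw [Matrix.mul_apply]
  simp only [W, Matrix.of_apply]
  rw [Finset.sum_eq_single (⟨g b.val, hg _ b.isLt⟩ : Fin (2 * d + 1))]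
  · by_cases h : a.val = f (g b.val) <;> simp [h]
  · intro c _ hc
    have h : (c : ℕ) ≠ g b.val := fun h => hc (Fin.ext h)
    simp [h]
  · simp

lemma W_congr (p : ℕ) [Fact p.Prime] (d : ℕ) (f f' : ℕ → ℕ) (w w' : ℕ → ℚ_[p])
    (hf : ∀ m, m < 2 * d + 1 → f m = f' m) (hw : ∀ m, m < 2 * d + 1 → w m = w' m) :
    W p d f w = W p d f' w' := by
  ext a b
  simp only [W, Matrix.of_apply, hf b.val b.isLt, hw b.val b.isLt]

lemma W_one (p : ℕ) [Fact p.Prime] (d : ℕ) :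
    W p d id (fun _ => 1) = 1 := by
  ext a b
  simp only [W, Matrix.of_apply, Matrix.one_apply, id, Fin.ext_iff]

/-- the transposition `(i-1, i)(d+i-1, d+i)` on `ℕ`. -/
def gsw (d i : ℕ) (m : ℕ) : ℕ :=
  if m = i - 1 then i else if m = i then i - 1
  else if m = d + i - 1 then d + i else if m = d + i then d + i - 1 else m

lemma sB_eq (p : ℕ) [Fact p.Prime] (d i : ℕ) (hd : 3 ≤ d) (h1 : 1 ≤ i) :
    sB p d i = W p d (gsw d i) (fun _ => 1) := by
  ext a b
  have ha := a.isLt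
  have hb := b.isLt
  simp only [sB, W, gsw, Matrix.of_apply, Fin.ext_iff]
  split_ifs <;> first | rfl | (exfalso; omega) | exact (False.elim (by assumption)) | (exfalso; simp only [false_or, or_false] at *; omega)

/-- permutation of `ṡ_d`: `(d-1, 2d-1)`. -/
def gsd (d : ℕ) (m : ℕ) : ℕ :=
  if m = d - 1 then 2 * d - 1 else if m = 2 * d - 1 then d - 1 else m

/-- weight of `ṡ_d`: `-1` at `2d`. -/
def wsd (p d : ℕ) [Fact p.Prime] (m : ℕ) : ℚ_[p] :=
  if m = 2 * d then -1 else 1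

lemma sBd_eq (p : ℕ) [Fact p.Prime] (d : ℕ) (hd : 3 ≤ d) :
    sBd p d = W p d (gsd d) (wsd p d) := by
  ext a b
  have ha := a.isLt
  have hb := b.isLt
  simp only [sBd, W, gsd, wsd, Matrix.of_apply, Fin.ext_iff]
  split_ifs <;> first | rfl | (exfalso; omega) | exact (False.elim (by assumption)) | (exfalso; simp only [false_or, or_false] at *; omega)

/-- permutation of `u̇`: `(0, d)`. -/
def gu (d : ℕ) (m : ℕ) : ℕ :=
  if m = 0 then d else if m = d then 0 else m

/-- weight of `u̇`. -/
def wu (p d : ℕ) [Fact p.Prime] (m : ℕ) : ℚ_[p] :=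
  if m = 0 then (p : ℚ_[p]) else if m = d then (p : ℚ_[p])⁻¹
  else if m = 2 * d then -1 else 1

lemma uB_eq (p : ℕ) [Fact p.Prime] (d : ℕ) (hd : 3 ≤ d) :
    uB p d = W p d (gu d) (wu p d) := by
  ext a b
  have ha := a.isLt
  have hb := b.isLt
  simp only [uB, W, gu, wu, Matrix.of_apply, Fin.ext_iff]
  split_ifs <;> first | rfl | (exfalso; omega) | exact (False.elim (by assumption)) | (exfalso; simp only [false_or, or_false] at *; omega)

/-- permutation of `ṡ_1 ṡ_2 ⋯ ṡ_k`. -/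
def fA (d k : ℕ) (m : ℕ) : ℕ :=
  if m < k then m + 1 else if m = k then 0
  else if d ≤ m ∧ m < d + k then m + 1 else if m = d + k then d else m

/-- permutation of `ṡ_{d-1} ṡ_{d-2} ⋯ ṡ_{d-k}`. -/
def fB (d k : ℕ) (m : ℕ) : ℕ :=
  if m = d - 1 - k then d - 1 else if d - 1 - k < m ∧ m ≤ d - 1 then m - 1
  else if m = 2 * d - 1 - k then 2 * d - 1
  else if 2 * d - 1 - k < m ∧ m ≤ 2 * d - 1 then m - 1 else m

lemma prodA (p : ℕ) [Fact p.Prime] (d : ℕ) (hd : 3 ≤ d) (k : ℕ) (hk : k ≤ d - 1) :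
    ((List.range k).map (fun j => sB p d (j + 1))).prod = W p d (fA d k) (fun _ => 1) := by
  induction k with
  | zero =>
      rw [List.range_zero, List.map_nil, List.prod_nil, ← W_one p d]
      exact W_congr p d _ _ _ _ (fun m hm => by simp only [fA, id]; split_ifs <;> omega)
        (fun m hm => rfl)
  | succ k ih =>
      rw [List.range_succ, List.map_append, List.prod_append, ih (by omega),
        List.map_singleton, List.prod_singleton, sB_eq p d (k + 1) hd (by omega),
        W_mul p d (fA d k) (gsw d (k + 1)) _ _
          (fun m hm => by simp only [gsw]; split_ifs <;> omega)]
      exact W_congr p d _ _ _ _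
        (fun m hm => by
          simp only [fA, gsw]
          split_ifs <;> first | omega | exact (False.elim (by assumption)) | (exfalso; simp only [false_or, or_false] at *; omega))
        (fun m hm => by ring)

lemma prodB (p : ℕ) [Fact p.Prime] (d : ℕ) (hd : 3 ≤ d) (k : ℕ) (hk : k ≤ d - 2) :
    ((List.range k).map (fun j => sB p d (d - 1 - j))).prod = W p d (fB d k) (fun _ => 1) := by
  induction k with
  | zero =>
      rw [List.range_zero, List.map_nil, List.prod_nil, ← W_one p d]
      exact W_congr p d _ _ _ _ (fun m hm => by simp only [fB, id]; split_ifs <;> omega)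
        (fun m hm => rfl)
  | succ k ih =>
      rw [List.range_succ, List.map_append, List.prod_append, ih (by omega),
        List.map_singleton, List.prod_singleton, sB_eq p d (d - 1 - k) hd (by omega),
        W_mul p d (fB d k) (gsw d (d - 1 - k)) _ _
          (fun m hm => by simp only [gsw]; split_ifs <;> omega)]
      exact W_congr p d _ _ _ _
        (fun m hm => by
          simp only [fB, gsw]
          split_ifs <;> first | omega | exact (False.elim (by assumption)) | (exfalso; simp only [false_or, or_false] at *; omega))
        (fun m hm => by ring)

/-- permutation of `ṡ_0`: `(0, d+1)(1, d)`. -/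
def fs0 (d : ℕ) (m : ℕ) : ℕ :=
  if m = 0 then d + 1 else if m = 1 then d else if m = d then 1
  else if m = d + 1 then 0 else m

/-- weight of `ṡ_0`. -/
def ws0 (p d : ℕ) [Fact p.Prime] (m : ℕ) : ℚ_[p] :=
  if m = 0 ∨ m = 1 then (p : ℚ_[p])
  else if m = d ∨ m = d + 1 then (p : ℚ_[p])⁻¹ else 1

lemma sB0_eq (p : ℕ) [Fact p.Prime] (d : ℕ) (hd : 3 ≤ d) :
    sB0 p d = W p d (fs0 d) (ws0 p d) := by
  rw [sB0, uB_eq p d hd, sB_eq p d 1 hd le_rfl,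
    W_mul p d (gu d) (gsw d 1) (wu p d) (fun _ => 1)
      (fun m hm => by simp only [gsw]; split_ifs <;> omega),
    W_mul p d (fun m => gu d (gsw d 1 m)) (gu d) (fun m => wu p d (gsw d 1 m) * 1) (wu p d)
      (fun m hm => by simp only [gu]; split_ifs <;> omega)]
  exact W_congr p d _ _ _ _
    (fun m hm => by
      simp only [gsw, gu, fs0]
      split_ifs <;> first | omega | exact (False.elim (by assumption)) | (exfalso; simp only [false_or, or_false] at *; omega))
    (fun m hm => by
      simp only [gsw, gu, wu, ws0]
      split_ifs <;> first | (exfalso; omega) | exact (False.elim (by assumption)) | ring1 | (exfalso; simp only [false_or, or_false] at *; omega))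

/-- permutation of `ṡ_d ṡ_{d-1} ⋯ ṡ_2`. -/
def G1 (d : ℕ) (m : ℕ) : ℕ :=
  if m = 1 then 2 * d - 1 else if 1 < m ∧ m ≤ d - 1 then m - 1
  else if m = d + 1 then d - 1 else if d + 1 < m ∧ m ≤ 2 * d - 1 then m - 1 else m

/-- permutation of `ṡ_1 ⋯ ṡ_{d-1} ṡ_d ṡ_{d-1} ⋯ ṡ_2`. -/
def Ffun (d : ℕ) (m : ℕ) : ℕ :=
  if m = 0 then 1 else if m = 1 then d else if m = d then d + 1
  else if m = d + 1 then 0 else m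

/-- permutation of `φ`: `(1, d+1)`. -/
def fphi (d : ℕ) (m : ℕ) : ℕ :=
  if m = 1 then d + 1 else if m = d + 1 then 1 else m

/-- weight of `φ`. -/
def wphi (p d : ℕ) [Fact p.Prime] (m : ℕ) : ℚ_[p] :=
  if m = 0 ∨ m = 1 then (p : ℚ_[p])
  else if m = d ∨ m = d + 1 then (p : ℚ_[p])⁻¹
  else if m = 2 * d then -1 else 1

lemma stage1 (d : ℕ) (hd : 3 ≤ d) (m : ℕ) (hm : m < 2 * d + 1) :
    gsd d (fB d (d - 2) m) = G1 d m := by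
  simp only [gsd, fB, G1]
  split_ifs <;> first | omega | exact (False.elim (by assumption)) | (exfalso; simp only [false_or, or_false] at *; omega)

lemma stage2 (d : ℕ) (hd : 3 ≤ d) (m : ℕ) (hm : m < 2 * d + 1) :
    fA d (d - 1) (G1 d m) = Ffun d m := by
  simp only [fA, G1, Ffun]
  split_ifs <;> first | omega | exact (False.elim (by assumption)) | (exfalso; simp only [false_or, or_false] at *; omega)

lemma stage3 (d : ℕ) (hd : 3 ≤ d) (m : ℕ) (hm : m < 2 * d + 1) :
    Ffun d (fs0 d m) = fphi d m := by
  simp only [Ffun, fs0, fphi]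
  split_ifs <;> first | omega | exact (False.elim (by assumption)) | (exfalso; simp only [false_or, or_false] at *; omega)

lemma fs0_lt (d : ℕ) (hd : 3 ≤ d) (m : ℕ) (hm : m < 2 * d + 1) :
    fs0 d m < 2 * d + 1 := by
  simp only [fs0]; split_ifs <;> omega

lemma wstage (p d : ℕ) [Fact p.Prime] (hd : 3 ≤ d) (m : ℕ) (hm : m < 2 * d + 1) :
    wsd p d (fB d (d - 2) m) = wsd p d m := by
  simp only [wsd, fB]
  split_ifs <;> first | rfl | (exfalso; omega) | exact (False.elim (by assumption)) | (exfalso; simp only [false_or, or_false] at *; omega)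

lemma phiB_eq (p : ℕ) [Fact p.Prime] (d : ℕ) (hd : 3 ≤ d) :
    phiB p d = W p d (fphi d) (wphi p d) := by
  rw [phiB, prodA p d hd (d - 1) le_rfl, sBd_eq p d hd, prodB p d hd (d - 2) le_rfl,
    sB0_eq p d hd,
    W_mul p d (fA d (d - 1)) (gsd d) (fun _ => 1) (wsd p d)
      (fun m hm => by simp only [gsd]; split_ifs <;> omega),
    W_mul p d (fun m => fA d (d - 1) (gsd d m)) (fB d (d - 2))
      (fun m => (1 : ℚ_[p]) * wsd p d m) (fun _ => 1)
      (fun m hm => by simp only [fB]; split_ifs <;> omega),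
    W_mul p d (fun m => fA d (d - 1) (gsd d (fB d (d - 2) m))) (fs0 d)
      (fun m => 1 * wsd p d (fB d (d - 2) m) * 1) (ws0 p d)
      (fun m hm => fs0_lt d hd m hm)]
  refine W_congr p d _ _ _ _ (fun m hm => ?_) (fun m hm => ?_)
  · rw [stage1 d hd _ (fs0_lt d hd m hm), stage2 d hd _ (fs0_lt d hd m hm),
      stage3 d hd m hm]
  · rw [wstage p d hd _ (fs0_lt d hd m hm)]
    simp only [wsd, fs0, ws0, wphi]
    split_ifs <;> first | (exfalso; omega) | exact (False.elim (by assumption)) | ring1 | (exfalso; simp only [false_or, or_false] at *; omega)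

/-- the diagonal weight of `φ²`. -/
def wsq (p d : ℕ) [Fact p.Prime] (m : ℕ) : ℚ_[p] :=
  if m = 0 then (p : ℚ_[p]) ^ 2 else if m = d then ((p : ℚ_[p]) ^ 2)⁻¹ else 1

lemma wsq_eq (p d : ℕ) [Fact p.Prime] (hd : 3 ≤ d) (m : ℕ) (hm : m < 2 * d + 1) :
    wphi p d (fphi d m) * wphi p d m = wsq p d m := by
  have hp : (p : ℚ_[p]) ≠ 0 := by
    exact_mod_cast Nat.cast_ne_zero.mpr (Fact.out : p.Prime).ne_zero
  simp only [wphi, fphi, wsq]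
  split_ifs <;>
    first
      | (exfalso; omega) | exact (False.elim (by assumption)) | ring1
      | exact inv_mul_cancel₀ hp | exact mul_inv_cancel₀ hp
      | rw [sq, mul_inv]
      | (exfalso; simp only [false_or, or_false] at *; omega)

lemma fphi_invol (d : ℕ) (hd : 3 ≤ d) (m : ℕ) (hm : m < 2 * d + 1) :
    fphi d (fphi d m) = m := by
  simp only [fphi]
  split_ifs <;> first | omega | exact (False.elim (by assumption)) | (exfalso; simp only [false_or, or_false] at *; omega)

lemma W_diag (p d : ℕ) [Fact p.Prime] (w : ℕ → ℚ_[p]) :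
    W p d id w = Matrix.diagonal (fun i : Fin (2 * d + 1) => w i.val) := by
  ext a b
  simp only [W, Matrix.of_apply, Matrix.diagonal_apply, Fin.ext_iff, id]
  split_ifs with h1 h2 h2 <;> first | (rw [h1]) | rfl | (exfalso; omega)

/-- `φ² = diag(p², E_{d-1}, p⁻², E_{d-1}, 1)`. -/
theorem stmt_11 (p d : ℕ) [Fact p.Prime] (hd : 3 ≤ d) :
    phiB p d ^ 2 =
      Matrix.diagonal (fun i : Fin (2 * d + 1) =>
        if i.val = 0 then (p : ℚ_[p]) ^ 2
        else if i.val = d then ((p : ℚ_[p]) ^ 2)⁻¹ else 1) := by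
  rw [pow_two, phiB_eq p d hd,
    W_mul p d (fphi d) (fphi d) (wphi p d) (wphi p d)
      (fun m hm => by simp only [fphi]; split_ifs <;> omega),
    W_congr p d _ id _ (wsq p d) (fun m hm => fphi_invol d hd m hm)
      (fun m hm => wsq_eq p d hd m hm),
    W_diag p d (wsq p d)]
  rfl

end
end
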